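/- Define a by a(0)=0, a(1)=1, a(2)=3, a(3)=5, and for n≥4: a(n)=a(n-3)+5·2^((n-2)/2)−2 if n even, a(n)=a(n-3)+7·2^((n-3)/2)−2 if n odd. Then the ratio a(2k)/a(2k-1) converges to 27/19 as k→∞, and a(2k+1)/a(2k) converges to 38/27. -/

import Mathlib

open Filter

/-- Periodic correction term. -/
def hanoiD (n : ℕ) : ℕ := if n % 3 = 0 then 81 else if n % 3 = 1 then 79 else 71

lemma hanoiD_le (n : ℕ) : hanoiD n ≤ 81 := by
  unfold hanoiD; split_ifs <;> norm_num

lemma hanoi_key (a : ℕ → ℕ)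
    (ha0 : a 0 = 0) (ha1 : a 1 = 1) (ha2 : a 2 = 3) (ha3 : a 3 = 5)
    (hae : ∀ n, 4 ≤ n → Even n → a n = a (n - 3) + 5 * 2 ^ ((n - 2) / 2) - 2)
    (hao : ∀ n, 4 ≤ n → Odd n → a n = a (n - 3) + 7 * 2 ^ ((n - 3) / 2) - 2) :
    ∀ n, 21 * a n + 14 * n + hanoiD n =
      (if n % 2 = 0 then 81 else 114) * 2 ^ (n / 2) := by
  intro n
  induction n using Nat.strong_induction_on with
  | _ n ih =>
    by_cases h4 : n < 4
    · interval_cases n <;> simp [ha0, ha1, ha2, ha3, hanoiD]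
    · push_neg at h4
      rcases Nat.even_or_odd n with hn | hn
      · -- n even, n = 2k+4
        obtain ⟨k, rfl⟩ : ∃ k, n = 2 * k + 4 := by
          have := Nat.even_iff.mp hn
          exact ⟨(n - 4) / 2, by omega⟩
        have hrec := hae (2 * k + 4) (by omega) hn
        have h3 : 2 * k + 4 - 3 = 2 * k + 1 := by omega
        have h2 : (2 * k + 4 - 2) / 2 = k + 1 := by omega
        rw [h3, h2] at hrec
        have IH := ih (2 * k + 1) (by omega)
        have hm1 : (2 * k + 1) % 2 = 1 := by omega
        have hd1 : (2 * k + 1) / 2 = k := by omega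
        rw [hm1, hd1] at IH
        norm_num at IH
        have hdd : hanoiD (2 * k + 1) = hanoiD (2 * k + 4) := by
          unfold hanoiD
          have : (2 * k + 1) % 3 = (2 * k + 4) % 3 := by omega
          rw [this]
        have hm0 : (2 * k + 4) % 2 = 0 := by omega
        have hd0 : (2 * k + 4) / 2 = k + 2 := by omega
        rw [hm0, hd0]
        norm_num
        have e2 : (2:ℕ) ^ (k + 2) = 4 * 2 ^ k := by ring
        have e1 : (2:ℕ) ^ (k + 1) = 2 * 2 ^ k := by ring
        have hp : 1 ≤ (2:ℕ) ^ k := Nat.one_le_two_pow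
        rw [e1] at hrec
        rw [e2]
        omega
      · -- n odd, n = 2k+5
        obtain ⟨k, rfl⟩ : ∃ k, n = 2 * k + 5 := by
          have := Nat.odd_iff.mp hn
          exact ⟨(n - 5) / 2, by omega⟩
        have hrec := hao (2 * k + 5) (by omega) hn
        have h3 : 2 * k + 5 - 3 = 2 * k + 2 := by omega
        have h2 : (2 * k + 5 - 3) / 2 = k + 1 := by omega
        rw [h2, h3] at hrec
        have IH := ih (2 * k + 2) (by omega)
        have hm1 : (2 * k + 2) % 2 = 0 := by omega
        have hd1 : (2 * k + 2) / 2 = k + 1 := by omega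
        rw [hm1, hd1] at IH
        norm_num at IH
        have hdd : hanoiD (2 * k + 2) = hanoiD (2 * k + 5) := by
          unfold hanoiD
          have : (2 * k + 2) % 3 = (2 * k + 5) % 3 := by omega
          rw [this]
        have hm0 : (2 * k + 5) % 2 = 1 := by omega
        have hd0 : (2 * k + 5) / 2 = k + 2 := by omega
        rw [hm0, hd0]
        norm_num
        have e2 : (2:ℕ) ^ (k + 2) = 4 * 2 ^ k := by ring
        have e1 : (2:ℕ) ^ (k + 1) = 2 * 2 ^ k := by ring
        have hp : 1 ≤ (2:ℕ) ^ k := Nat.one_le_two_pow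
        rw [e1] at hrec IH
        rw [e2]
        omega

lemma hanoiD_ge (n : ℕ) : 71 ≤ hanoiD n := by
  unfold hanoiD; split_ifs <;> norm_num

/-- The error term `(c*n + f n)/2^n` tends to zero. -/
lemma hanoi_err {c : ℝ} (hc : 0 ≤ c) (f : ℕ → ℝ) (hf0 : ∀ n, 0 ≤ f n)
    (hf : ∀ n, f n ≤ 100) :
    Tendsto (fun k : ℕ => (c * k + f k) / 2 ^ k) atTop (nhds 0) := by
  have h1 : Tendsto (fun k : ℕ => c * ((k : ℝ) * (1/2:ℝ) ^ k) + 100 * (1/2:ℝ) ^ k)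
      atTop (nhds (c * 0 + 100 * 0)) :=
    ((tendsto_self_mul_const_pow_of_lt_one (by norm_num) (by norm_num)).const_mul c).add
      ((tendsto_pow_atTop_nhds_zero_of_lt_one (by norm_num) (by norm_num)).const_mul 100)
  rw [mul_zero, mul_zero, add_zero] at h1
  apply squeeze_zero_norm _ h1
  intro k
  have hpow : (0:ℝ) < 2 ^ k := by positivity
  have hk : (0:ℝ) ≤ (k : ℝ) := Nat.cast_nonneg k
  have hhalf : ((1:ℝ)/2) ^ k = 1 / 2 ^ k := by rw [div_pow, one_pow]
  rw [Real.norm_eq_abs,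
    abs_of_nonneg (div_nonneg (add_nonneg (mul_nonneg hc hk) (hf0 k)) hpow.le), hhalf]
  have h3 : c * ((k:ℝ) * (1 / 2 ^ k)) + 100 * (1 / 2 ^ k) = (c * k + 100) / 2 ^ k := by
    field_simp
  rw [h3]
  gcongr
  exact hf k

theorem stmt4 (a : ℕ → ℕ)
    (ha0 : a 0 = 0) (ha1 : a 1 = 1) (ha2 : a 2 = 3) (ha3 : a 3 = 5)
    (hae : ∀ n, 4 ≤ n → Even n → a n = a (n - 3) + 5 * 2 ^ ((n - 2) / 2) - 2)
    (hao : ∀ n, 4 ≤ n → Odd n → a n = a (n - 3) + 7 * 2 ^ ((n - 3) / 2) - 2) :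
    Tendsto (fun k : ℕ => (a (2 * k) : ℝ) / (a (2 * k - 1) : ℝ)) atTop
      (nhds (27 / 19)) ∧
    Tendsto (fun k : ℕ => (a (2 * k + 1) : ℝ) / (a (2 * k) : ℝ)) atTop
      (nhds (38 / 27)) := by
  have key := hanoi_key a ha0 ha1 ha2 ha3 hae hao
  have hdiv : ∀ (x y : ℝ) (k : ℕ), x / 2 ^ k / (y / 2 ^ k) = x / y := by
    intro x y k
    rw [div_div_div_comm, div_self (by positivity : (2:ℝ) ^ k ≠ 0), div_one]
  -- limit of a(2k)/2^k
  have tA : Tendsto (fun k : ℕ => (a (2 * k) : ℝ) / 2 ^ k) atTop (nhds (27/7)) := by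
    have terr := hanoi_err (c := 28) (by norm_num) (fun k => (hanoiD (2 * k) : ℝ))
      (fun n => by positivity)
      (fun n => by
        have h81 : (hanoiD (2 * n) : ℝ) ≤ 81 := by exact_mod_cast hanoiD_le _
        linarith)
    have t1 : Tendsto (fun k : ℕ => 27/7 - (1/21) *
        ((28 * (k:ℝ) + (hanoiD (2 * k) : ℝ)) / 2 ^ k)) atTop (nhds (27/7 - (1/21) * 0)) :=
      tendsto_const_nhds.sub (terr.const_mul (1/21))
    rw [mul_zero, sub_zero] at t1
    refine t1.congr fun k => ?_
    have h := key (2 * k)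
    rw [show (2 * k) % 2 = 0 by omega, show (2 * k) / 2 = k by omega] at h
    norm_num at h
    have h' : (21:ℝ) * a (2 * k) + 14 * (2 * (k:ℝ)) + hanoiD (2 * k) = 81 * 2 ^ k := by
      exact_mod_cast h
    have hpow : (0:ℝ) < 2 ^ k := by positivity
    have hval : (a (2 * k) : ℝ)
        = 27/7 * 2 ^ k - 1/21 * (28 * (k:ℝ) + (hanoiD (2 * k) : ℝ)) := by linarith
    rw [hval, sub_div, mul_div_assoc, mul_div_assoc, div_self hpow.ne', mul_one]
  -- limit of a(2k-1)/2^k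
  have tB : Tendsto (fun k : ℕ => (a (2 * k - 1) : ℝ) / 2 ^ k) atTop (nhds (19/7)) := by
    have terr := hanoi_err (c := 28) (by norm_num)
      (fun k => (hanoiD (2 * k - 1) : ℝ) - 14)
      (fun n => by
        have h71 : (71:ℝ) ≤ (hanoiD (2 * n - 1) : ℝ) := by exact_mod_cast hanoiD_ge _
        linarith)
      (fun n => by
        have h81 : (hanoiD (2 * n - 1) : ℝ) ≤ 81 := by exact_mod_cast hanoiD_le _
        linarith)
    have t1 : Tendsto (fun k : ℕ => 19/7 - (1/21) *
        ((28 * (k:ℝ) + ((hanoiD (2 * k - 1) : ℝ) - 14)) / 2 ^ k)) atTop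
        (nhds (19/7 - (1/21) * 0)) :=
      tendsto_const_nhds.sub (terr.const_mul (1/21))
    rw [mul_zero, sub_zero] at t1
    refine t1.congr' ?_
    filter_upwards [eventually_ge_atTop 1] with k hk
    have h := key (2 * k - 1)
    rw [show (2 * k - 1) % 2 = 1 by omega, show (2 * k - 1) / 2 = k - 1 by omega] at h
    norm_num at h
    have h2 : (2:ℕ) ^ (k - 1) * 2 = 2 ^ k := by
      rw [← pow_succ]; congr 1; omega
    have hN : 42 * a (2 * k - 1) + 28 * (2 * k - 1) + 2 * hanoiD (2 * k - 1)
        = 114 * 2 ^ k := by omega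
    have h' : (42:ℝ) * a (2 * k - 1) + 28 * (2 * (k:ℝ) - 1) + 2 * hanoiD (2 * k - 1)
        = 114 * 2 ^ k := by
      have := congrArg (fun x : ℕ => (x : ℝ)) hN
      push_cast [Nat.cast_sub (by omega : 1 ≤ 2 * k)] at this
      linarith [this]
    have hpow : (0:ℝ) < 2 ^ k := by positivity
    have hval : (a (2 * k - 1) : ℝ)
        = 19/7 * 2 ^ k - 1/21 * (28 * (k:ℝ) + ((hanoiD (2 * k - 1) : ℝ) - 14)) := by
      linarith
    rw [hval, sub_div, mul_div_assoc, mul_div_assoc, div_self hpow.ne', mul_one]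
  -- limit of a(2k+1)/2^k
  have tC : Tendsto (fun k : ℕ => (a (2 * k + 1) : ℝ) / 2 ^ k) atTop (nhds (38/7)) := by
    have terr := hanoi_err (c := 28) (by norm_num)
      (fun k => (hanoiD (2 * k + 1) : ℝ) + 14)
      (fun n => by positivity)
      (fun n => by
        have h81 : (hanoiD (2 * n + 1) : ℝ) ≤ 81 := by exact_mod_cast hanoiD_le _
        linarith)
    have t1 : Tendsto (fun k : ℕ => 38/7 - (1/21) *
        ((28 * (k:ℝ) + ((hanoiD (2 * k + 1) : ℝ) + 14)) / 2 ^ k)) atTop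
        (nhds (38/7 - (1/21) * 0)) :=
      tendsto_const_nhds.sub (terr.const_mul (1/21))
    rw [mul_zero, sub_zero] at t1
    refine t1.congr fun k => ?_
    have h := key (2 * k + 1)
    rw [show (2 * k + 1) % 2 = 1 by omega, show (2 * k + 1) / 2 = k by omega] at h
    norm_num at h
    have h' : (21:ℝ) * a (2 * k + 1) + 14 * (2 * (k:ℝ) + 1) + hanoiD (2 * k + 1)
        = 114 * 2 ^ k := by exact_mod_cast h
    have hpow : (0:ℝ) < 2 ^ k := by positivity
    have hval : (a (2 * k + 1) : ℝ)
        = 38/7 * 2 ^ k - 1/21 * (28 * (k:ℝ) + ((hanoiD (2 * k + 1) : ℝ) + 14)) := by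
      linarith
    rw [hval, sub_div, mul_div_assoc, mul_div_assoc, div_self hpow.ne', mul_one]
  constructor
  · have h := tA.div tB (by norm_num)
    rw [show (27/7 : ℝ) / (19/7) = 27/19 by norm_num] at h
    exact h.congr fun k => hdiv _ _ _
  · have h := tC.div tA (by norm_num)
    rw [show (38/7 : ℝ) / (27/7) = 38/27 by norm_num] at h
    exact h.congr fun k => hdiv _ _ _
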